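/- Let (H,K) with H ⊆ [0,ℓ−1], K ⊆ [1,ℓ−1], and define 𝔡(H,K) via the symmetric difference H△K = {j_1 < … < j_t} as the union of intervals [j_ν+1, j_{ν+1}] for odd ν (with j_{t+1} = ℓ). Then 𝔡(H†, K') = [1,ℓ] \ 𝔡(H,K), where H† = [0,ℓ−1]\H and K' = [1,ℓ−1]\K. -/

import Mathlib

theorem sorted_getElem_lt_iff (x : ℕ) : ∀ (l : List ℕ), l.Pairwise (· < ·) → ∀ i (hi : i < l.length),
    (l[i] < x ↔ i < (l.filter (· < x)).length) := by
  intro l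
  induction l with
  | nil => simp
  | cons a l ih =>
    intro hs i hi
    rw [List.pairwise_cons] at hs
    cases i with
    | zero =>
      simp only [List.getElem_cons_zero]
      constructor
      · intro h; simp [List.filter_cons, h]
      · intro h
        by_contra hax
        have : (a :: l).filter (· < x) = [] := by
          rw [List.filter_eq_nil_iff]
          intro b hb
          simp only [decide_eq_true_eq, not_lt]
          rcases List.mem_cons.mp hb with rfl | hb
          · omega
          · have := hs.1 b hb; omega
        simp [this] at h
    | succ n =>
      have hn : n < l.length := by simpa using hi
      have h1 := ih hs.2 n hn
      simp only [List.getElem_cons_succ]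
      by_cases hax : a < x
      · have : (a :: l).filter (· < x) = a :: l.filter (· < x) := by
          simp [List.filter_cons, hax]
        rw [this]
        simp only [List.length_cons]
        omega
      · have hfl : l.filter (· < x) = [] := by
          rw [List.filter_eq_nil_iff]
          intro b hb
          simp only [decide_eq_true_eq, not_lt]
          have := hs.1 b hb; omega
        have : (a :: l).filter (· < x) = [] := by
          simp [List.filter_cons, hax, hfl]
        rw [this]
        have hmem : l[n] ∈ l := List.getElem_mem hn
        have := hs.1 _ hmem
        simp only [List.length_nil]
        omega

/-- For `S = {j_1 < … < j_t} ⊆ [0,ℓ−1]`, the set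
`𝔡 = ⋃_{ν odd} [j_ν+1, j_{ν+1}]` with `j_{t+1} := ℓ` (ν is 1-based, so 0-based even). -/
def frakD (ℓ : ℕ) (S : Finset ℕ) : Finset ℕ :=
  let L := S.sort (· ≤ ·) ++ [ℓ]
  ((Finset.range S.card).filter fun ν => ν % 2 = 0).biUnion fun ν =>
    Finset.Icc (L.getD ν 0 + 1) (L.getD (ν + 1) 0)

theorem frakD_eq (ℓ : ℕ) (S : Finset ℕ) (hS : S ⊆ Finset.range ℓ) :
    frakD ℓ S = (Finset.Icc 1 ℓ).filter (fun x => (S.filter (· < x)).card % 2 = 1) := by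
  ext x
  simp only [frakD, Finset.mem_biUnion, Finset.mem_filter, Finset.mem_range, Finset.mem_Icc]
  set l := S.sort (· ≤ ·) with hl
  have hlen : l.length = S.card := Finset.length_sort _
  have hsort : l.Pairwise (· < ·) := (Finset.sortedLT_sort S).pairwise
  have hnodup : l.Nodup := S.sort_nodup _
  set c := (l.filter (· < x)).length with hc
  have hcard : (S.filter (· < x)).card = c := by
    rw [hc, ← List.toFinset_card_of_nodup (hnodup.filter _), List.toFinset_filter,
      hl, Finset.sort_toFinset]
    simp
  have hclen : c ≤ l.length := List.length_filter_le _ _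
  have key : ∀ i (hi : i < l.length), (l[i] < x ↔ i < c) :=
    sorted_getElem_lt_iff x l hsort
  have hmemlt : ∀ i (hi : i < l.length), l[i] < ℓ := by
    intro i hi
    have : l[i] ∈ S := by
      rw [← Finset.mem_sort (· ≤ ·), ← hl]
      exact List.getElem_mem hi
    exact Finset.mem_range.mp (hS this)
  have hgetD : ∀ i (hi : i < l.length), (l ++ [ℓ]).getD i 0 = l[i] := by
    intro i hi
    rw [List.getD_append _ _ _ _ hi, List.getD_eq_getElem _ _ hi]
  have hgetDlast : (l ++ [ℓ]).getD l.length 0 = ℓ := by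
    rw [List.getD_append_right _ _ _ _ le_rfl]
    simp
  rw [hcard]
  constructor
  · rintro ⟨ν, ⟨hνlt, hνe⟩, hx1, hx2⟩
    rw [← hlen] at hνlt
    rw [hgetD ν hνlt] at hx1
    have hνc : ν < c := (key ν hνlt).mp (by omega)
    rcases lt_or_eq_of_le (Nat.succ_le_of_lt hνlt) with h | h
    · rw [hgetD (ν+1) h] at hx2
      have : ¬ (ν + 1 < c) := fun hcon => by
        have := (key (ν+1) h).mpr hcon; omega
      have hxl : x ≤ l[ν+1] := hx2
      have := hmemlt (ν+1) h
      refine ⟨⟨by omega, by omega⟩, by omega⟩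
    · rw [show ν + 1 = l.length from h, hgetDlast] at hx2
      refine ⟨⟨by omega, hx2⟩, by omega⟩
  · rintro ⟨⟨hx1, hx2⟩, hodd⟩
    refine ⟨c - 1, ⟨by omega, by omega⟩, ?_, ?_⟩
    · have h1 : c - 1 < l.length := by omega
      rw [hgetD _ h1]
      have := (key _ h1).mpr (by omega)
      omega
    · rcases lt_or_eq_of_le (show c ≤ l.length by omega) with h | h
      · have h1 : c - 1 + 1 < l.length := by omega
        rw [hgetD _ h1]
        have : ¬ l[c-1+1] < x := fun hcon => by
          have := (key _ h1).mp hcon; omega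
        omega
      · have : c - 1 + 1 = l.length := by omega
        rw [this, hgetDlast]
        exact hx2

theorem parity_flip (S : Finset ℕ) (x : ℕ) (hx : 1 ≤ x) :
    ((symmDiff S {0}).filter (· < x)).card % 2 = 1 ↔ ¬ ((S.filter (· < x)).card % 2 = 1) := by
  by_cases h0 : 0 ∈ S
  · have h1 : symmDiff S {0} = S.erase 0 := by
      ext y
      simp only [Finset.mem_symmDiff, Finset.mem_singleton, Finset.mem_erase]
      constructor
      · rintro (⟨h, hn⟩ | ⟨rfl, h⟩)
        · exact ⟨hn, h⟩
        · exact absurd h0 h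
      · rintro ⟨hn, h⟩; exact Or.inl ⟨h, hn⟩
    rw [h1, Finset.filter_erase]
    have h2 : 0 ∈ S.filter (· < x) := Finset.mem_filter.mpr ⟨h0, by omega⟩
    rw [Finset.card_erase_of_mem h2]
    have := Finset.card_pos.mpr ⟨0, h2⟩
    omega
  · have h1 : symmDiff S {0} = insert 0 S := by
      ext y
      simp only [Finset.mem_symmDiff, Finset.mem_singleton, Finset.mem_insert]
      constructor
      · rintro (⟨h, _⟩ | ⟨rfl, _⟩)
        · exact Or.inr h
        · exact Or.inl rfl
      · rintro (rfl | h)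
        · exact Or.inr ⟨rfl, h0⟩
        · exact Or.inl ⟨h, fun hc => h0 (hc ▸ h)⟩
    rw [h1, Finset.filter_insert, if_pos (show (0:ℕ) < x by omega),
      Finset.card_insert_of_notMem (fun hc => h0 (Finset.mem_filter.mp hc).1)]
    omega

/-- With `H† = [0,ℓ−1]\H` and `K' = [1,ℓ−1]\K`, one has
`𝔡(H†, K') = [1,ℓ] \ 𝔡(H,K)` where `𝔡` is applied to the symmetric difference. -/
theorem frakD_compl (ℓ : ℕ) (hℓ : 1 ≤ ℓ) (H K : Finset ℕ)
    (hH : H ⊆ Finset.range ℓ) (hK : K ⊆ Finset.Icc 1 (ℓ - 1)) :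
    frakD ℓ (symmDiff (Finset.range ℓ \ H) (Finset.Icc 1 (ℓ - 1) \ K))
      = Finset.Icc 1 ℓ \ frakD ℓ (symmDiff H K) := by
  have hSD : symmDiff (Finset.range ℓ \ H) (Finset.Icc 1 (ℓ - 1) \ K)
      = symmDiff (symmDiff H K) {0} := by
    ext x
    simp only [Finset.mem_symmDiff, Finset.mem_sdiff, Finset.mem_range, Finset.mem_Icc,
      Finset.mem_singleton]
    have hxH : x ∈ H → x < ℓ := fun h => Finset.mem_range.mp (hH h)
    have hxK : x ∈ K → 1 ≤ x ∧ x ≤ ℓ - 1 := fun h => Finset.mem_Icc.mp (hK h)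
    by_cases h1 : x ∈ H <;> by_cases h2 : x ∈ K <;> simp [h1, h2] <;>
      first
        | (specialize hxH h1; specialize hxK h2; omega)
        | (specialize hxH h1; omega)
        | (specialize hxK h2; omega)
        | omega
  have hsub1 : symmDiff H K ⊆ Finset.range ℓ := by
    intro x hx
    rw [Finset.mem_symmDiff] at hx
    rcases hx with ⟨h, _⟩ | ⟨h, _⟩
    · exact hH h
    · have := Finset.mem_Icc.mp (hK h)
      exact Finset.mem_range.mpr (by omega)
  have hsub2 : symmDiff (symmDiff H K) {0} ⊆ Finset.range ℓ := by
    intro x hx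
    rw [Finset.mem_symmDiff] at hx
    rcases hx with ⟨h, _⟩ | ⟨h, _⟩
    · exact hsub1 h
    · rw [Finset.mem_singleton] at h
      exact Finset.mem_range.mpr (by omega)
  rw [hSD, frakD_eq ℓ _ hsub2, frakD_eq ℓ _ hsub1]
  ext x
  simp only [Finset.mem_filter, Finset.mem_sdiff, Finset.mem_Icc]
  by_cases hx : 1 ≤ x ∧ x ≤ ℓ
  · have := parity_flip (symmDiff H K) x hx.1
    tauto
  · tauto
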